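/- Let $n\geq 3$ and let $\mathcal{L}_A$ be the $n\times n$ matrix with diagonal entries $\frac{2}{3}$, super/sub-diagonal entries $-\frac{1}{3}$, and corner entries $-\frac{1}{3}$ in positions $(1,n),(n,1)$. Then the sum of all $(n-2)\times(n-2)$ principal minors of $\mathcal{L}_A$ (over all pairs of deleted indices) equals $\frac{n^{2}(n^{2}-1)}{4\cdot 3^{n-1}}$. -/

import Mathlib

/-- The matrix `𝓛_A`: diagonal `2/3`, subdiagonal and superdiagonal `-1/3`,
corner entries `-1/3` at positions `(1,n)` and `(n,1)`. -/
noncomputable def LA (n : ℕ) : Matrix (Fin n) (Fin n) ℝ :=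
  Matrix.of fun i j =>
    if i = j then 2 / 3
    else if i.val + 1 = j.val ∨ j.val + 1 = i.val then -(1 / 3)
    else if (i.val = 0 ∧ j.val = n - 1) ∨ (i.val = n - 1 ∧ j.val = 0) then -(1 / 3)
    else 0

/-- Tridiagonal "path" matrix with diagonal `2/3` and off-diagonal `-1/3`. -/
noncomputable def Pm (k : ℕ) : Matrix (Fin k) (Fin k) ℝ :=
  Matrix.of fun i j =>
    if i.val = j.val then 2/3 else if i.val + 1 = j.val ∨ j.val + 1 = i.val then -(1/3) else 0

lemma Pm_apply {k : ℕ} (i j : Fin k) :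
    Pm k i j = if i.val = j.val then 2/3
      else if i.val + 1 = j.val ∨ j.val + 1 = i.val then -(1/3) else 0 := rfl

lemma LA_apply {n : ℕ} (u v : Fin n) :
    LA n u v = if u.val = v.val then 2/3
      else if u.val + 1 = v.val ∨ v.val + 1 = u.val then -(1/3)
      else if (u.val = 0 ∧ v.val = n - 1) ∨ (u.val = n - 1 ∧ v.val = 0) then -(1/3)
      else 0 := by
  simp only [LA, Matrix.of_apply, Fin.ext_iff]

lemma val_succAbove {k : ℕ} (q : Fin (k+1)) (t : Fin k) :
    (q.succAbove t).val = if t.val < q.val then t.val else t.val + 1 := by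
  rw [Fin.succAbove]
  split_ifs with h1 h2 h2 <;>
    simp_all [Fin.lt_def, Fin.castSucc, Fin.castAdd, Fin.castLE]

lemma detPm : ∀ k : ℕ, (Pm k).det = (k+1)/3^k := by
  have key : ∀ k, (Pm k).det = (k+1)/3^k ∧ (Pm (k+1)).det = ((k+1)+1)/3^(k+1) := by
    intro k
    induction k with
    | zero =>
      constructor
      · simp [Matrix.det_fin_zero]
      · rw [show (Pm 1).det = Pm 1 0 0 from Matrix.det_fin_one _]
        norm_num [Pm_apply]
    | succ k ih =>
      refine ⟨by exact_mod_cast ih.2, ?_⟩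
      rw [Matrix.det_succ_row_zero]
      rw [Fin.sum_univ_succ, Fin.sum_univ_succ]
      have hz : ∀ j : Fin k, (-1 : ℝ) ^ (((j.succ.succ : Fin (k+2)) : ℕ)) *
          Pm (k+2) 0 j.succ.succ *
          (Matrix.submatrix (Pm (k+2)) Fin.succ (j.succ.succ).succAbove).det = 0 := by
        intro j
        have : Pm (k+2) 0 j.succ.succ = 0 := by
          rw [Pm_apply]
          have := j.isLt
          simp [Fin.val_succ]
        rw [this]; ring
      rw [Finset.sum_eq_zero fun j _ => hz j, add_zero]
      have h1 : (Matrix.submatrix (Pm (k+2)) Fin.succ ((0 : Fin (k+2)).succAbove))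
          = Pm (k+1) := by
        ext a b
        simp only [Matrix.submatrix_apply, Fin.succAbove_zero, Pm_apply, Fin.val_succ]
        split_ifs <;> first | rfl | omega
      -- second minor
      have h2 : (Matrix.submatrix (Pm (k+2)) Fin.succ ((1 : Fin (k+2)).succAbove)).det
          = -(1/3) * (Pm k).det := by
        rw [Matrix.det_succ_column_zero, Fin.sum_univ_succ]
        have hcol : ∀ a : Fin k,
            (Matrix.submatrix (Pm (k+2)) Fin.succ ((1 : Fin (k+2)).succAbove)) a.succ 0 = 0 := by
          intro a
          have h0 : ((1 : Fin (k+2)).succAbove 0).val = 0 := by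
            rw [val_succAbove]; simp [Fin.val_one]
          simp only [Matrix.submatrix_apply, Pm_apply, h0, Fin.val_succ]
          simp
        rw [Finset.sum_eq_zero (fun a _ => by rw [hcol a]; ring), add_zero]
        have hM00 : (Matrix.submatrix (Pm (k+2)) Fin.succ ((1 : Fin (k+2)).succAbove)) 0 0
            = -(1/3) := by
          have h0 : ((1 : Fin (k+2)).succAbove 0).val = 0 := by
            rw [val_succAbove]; simp [Fin.val_one]
          simp only [Matrix.submatrix_apply, Pm_apply, h0]
          norm_num
        have hmin : (Matrix.submatrix
            (Matrix.submatrix (Pm (k+2)) Fin.succ ((1 : Fin (k+2)).succAbove))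
              ((0 : Fin (k+1)).succAbove) Fin.succ) = Pm k := by
          ext a b
          have hb : ((1 : Fin (k+2)).succAbove b.succ).val = b.val + 2 := by
            rw [val_succAbove]
            have := b.isLt
            simp [Fin.val_one, Fin.val_succ]
          simp only [Matrix.submatrix_apply, Fin.succAbove_zero, Pm_apply, Fin.val_succ, hb]
          split_ifs <;> first | rfl | omega
        rw [hmin, hM00]
        simp
      rw [show (Fin.succ 0 : Fin (k+2)) = 1 from rfl, h1, h2]
      have hP0 : Pm (k+2) 0 0 = 2/3 := by rw [Pm_apply]; norm_num
      have hP1 : Pm (k+2) 0 1 = -(1/3) := by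
        rw [Pm_apply]; simp [Fin.val_one]
      rw [hP0, hP1, ih.1, ih.2]
      push_cast
      simp only [Fin.val_zero, Fin.val_one, pow_zero, pow_one]
      field_simp
      ring
  exact fun k => (key k).1

lemma minor_det (m : ℕ) (hm : 1 ≤ m) (i j : ℕ) (hij : i < j) (hj : j < m + 2)
    (f : Fin m → Fin (m + 2))
    (hf : ∀ k : Fin m, (f k).val =
      if k.val < i then k.val else if k.val + 1 < j then k.val + 1 else k.val + 2) :
    ((LA (m+2)).submatrix f f).det = (((j-i) * (m+2-(j-i)) : ℕ) : ℝ) / 3^m := by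
  haveI : NeZero m := ⟨by omega⟩
  set a := j - i - 1 with ha
  set b := m - a with hb
  have hab : a + b = m := by omega
  have hc : i % (m) < m := Nat.mod_lt _ (by omega)
  set c : Fin m := ⟨i % m, hc⟩ with hcdef
  let e : Fin a ⊕ Fin b ≃ Fin m :=
    (finSumFinEquiv.trans (finCongr hab)).trans (Equiv.addRight c)
  have hval : ∀ x : Fin a ⊕ Fin b, (e x).val =
      (((Sum.elim (fun t : Fin a => (t:ℕ)) (fun s : Fin b => a + (s:ℕ)) x) + i % m) % m) := by
    intro x
    cases x with
    | inl t => simp [e, Fin.add_def, finSumFinEquiv, Fin.ext_iff, Equiv.addRight, c]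
    | inr s => simp [e, Fin.add_def, finSumFinEquiv, Fin.ext_iff, Equiv.addRight, c]
  -- vertex values
  have hv : ∀ x : Fin a ⊕ Fin b, (f (e x)).val =
      Sum.elim (fun t : Fin a => i + 1 + (t:ℕ))
        (fun s : Fin b => if (s:ℕ) < (m+1) - j then j + 1 + (s:ℕ) else (s:ℕ) - ((m+1)-j)) x := by
    intro x
    rcases Nat.lt_or_ge i m with him | him
    · have hmod : i % m = i := Nat.mod_eq_of_lt him
      cases x with
      | inl t =>
        have ht := t.isLt
        have h1 : (e (Sum.inl t)).val = t + i := by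
          rw [hval]; simp only [Sum.elim_inl, hmod]
          exact Nat.mod_eq_of_lt (by omega)
        rw [hf, h1]; simp only [Sum.elim_inl]
        split_ifs <;> omega
      | inr s =>
        have hs := s.isLt
        rcases Nat.lt_or_ge (a + s + i) m with hlt | hge
        · have h1 : (e (Sum.inr s)).val = a + s + i := by
            rw [hval]; simp only [Sum.elim_inr, hmod]
            exact Nat.mod_eq_of_lt (by omega)
          rw [hf, h1]; simp only [Sum.elim_inr]
          split_ifs <;> omega
        · have h1 : (e (Sum.inr s)).val = a + s + i - m := by
            rw [hval]; simp only [Sum.elim_inr, hmod]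
            rw [Nat.mod_eq_sub_mod hge]
            exact Nat.mod_eq_of_lt (by omega)
          rw [hf, h1]; simp only [Sum.elim_inr]
          split_ifs <;> omega
    · -- i = m, so j = m+1, a = 0
      have hmod : i % m = 0 := by
        have : i = m := by omega
        rw [this]; exact Nat.mod_self m
      cases x with
      | inl t => exact absurd t.isLt (by omega)
      | inr s =>
        have hs := s.isLt
        have h1 : (e (Sum.inr s)).val = s := by
          rw [hval]; simp only [Sum.elim_inr, hmod]
          have ha0 : a = 0 := by omega
          rw [ha0]; simp only [Nat.zero_add, Nat.add_zero]
          exact Nat.mod_eq_of_lt (by omega)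
        rw [hf, h1]; simp only [Sum.elim_inr]
        split_ifs <;> omega
  have hdet : ((LA (m+2)).submatrix f f).det
      = (((LA (m+2)).submatrix f f).submatrix e e).det :=
    (Matrix.det_submatrix_equiv_self e _).symm
  rw [hdet]
  have hblock : (((LA (m+2)).submatrix f f).submatrix e e)
      = Matrix.fromBlocks (Pm a) 0 0 (Pm b) := by
    ext x y
    rw [Matrix.submatrix_apply, Matrix.submatrix_apply, LA_apply]
    have hx := hv x
    have hy := hv y
    cases x with
    | inl t =>
      have ht := t.isLt
      cases y with
      | inl t' =>
        have ht' := t'.isLt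
        simp only [Sum.elim_inl] at hx hy
        rw [hx, hy]
        show _ = Pm a t t'
        simp only [Pm, Matrix.of_apply]
        split_ifs <;> first | rfl | omega
      | inr s' =>
        have hs' := s'.isLt
        simp only [Sum.elim_inl, Sum.elim_inr] at hx hy
        rw [hx, hy]
        show _ = (0 : Matrix (Fin a) (Fin b) ℝ) t s'
        simp only [Matrix.zero_apply]
        split_ifs at hy ⊢ <;> first | rfl | omega
    | inr s =>
      have hs := s.isLt
      cases y with
      | inl t' =>
        have ht' := t'.isLt
        simp only [Sum.elim_inl, Sum.elim_inr] at hx hy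
        rw [hx, hy]
        show _ = (0 : Matrix (Fin b) (Fin a) ℝ) s t'
        simp only [Matrix.zero_apply]
        split_ifs at hx ⊢ <;> first | rfl | omega
      | inr s' =>
        have hs' := s'.isLt
        simp only [Sum.elim_inr] at hx hy
        rw [hx, hy]
        show _ = Pm b s s'
        simp only [Pm, Matrix.of_apply]
        split_ifs at hx hy ⊢ <;> first | rfl | omega
  rw [hblock, Matrix.det_fromBlocks_zero₂₁, detPm, detPm]
  have h1 : (a : ℝ) + 1 = ((j - i : ℕ) : ℝ) := by
    have : a + 1 = j - i := by omega
    rw [← this]; push_cast; ring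
  have h2 : (b : ℝ) + 1 = ((m + 2 - (j - i) : ℕ) : ℝ) := by
    have : b + 1 = m + 2 - (j - i) := by omega
    rw [← this]; push_cast; ring
  rw [h1, h2]
  rw [div_mul_div_comm, ← pow_add, hab]
  push_cast
  ring

lemma tri_sum (G : ℕ → ℕ) (n : ℕ) :
    ∑ y ∈ Finset.range n, ∑ d ∈ Finset.range y, G d
      = ∑ d ∈ Finset.range n, (n - 1 - d) * G d := by
  induction n with
  | zero => simp
  | succ n ih =>
    rw [Finset.sum_range_succ, ih, Finset.sum_range_succ]
    simp only [Nat.add_sub_cancel]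
    rw [Nat.sub_self, zero_mul, add_zero]
    rw [← Finset.sum_add_distrib]
    apply Finset.sum_congr rfl
    intro d hd
    rw [Finset.mem_range] at hd
    have : n - d = (n - 1 - d) + 1 := by omega
    rw [this]; ring

lemma sum_sq (n : ℕ) : ∑ d ∈ Finset.range n, ((d:ℝ))^2 = n*(n-1)*(2*n-1)/6 := by
  induction n with
  | zero => simp
  | succ n ih => rw [Finset.sum_range_succ, ih]; push_cast; ring

lemma sum_cb (n : ℕ) : ∑ d ∈ Finset.range n, ((d:ℝ))^3 = (n*(n-1)/2)^2 := by
  induction n with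
  | zero => simp
  | succ n ih => rw [Finset.sum_range_succ, ih]; push_cast; ring

lemma sumN (n : ℕ) (hn : 1 ≤ n) :
    ((∑ x ∈ Finset.range n, ∑ y ∈ Finset.range n,
        if x < y then (y-x)*(n-(y-x)) else 0 : ℕ) : ℝ)
      = (n:ℝ)^2 * ((n:ℝ)^2 - 1) / 12 := by
  have step1 : (∑ x ∈ Finset.range n, ∑ y ∈ Finset.range n,
        if x < y then (y-x)*(n-(y-x)) else 0 : ℕ)
      = ∑ y ∈ Finset.range n, ∑ x ∈ Finset.range n,
        (if x < y then (y-x)*(n-(y-x)) else 0) := Finset.sum_comm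
  have step2 : ∀ y ∈ Finset.range n,
      (∑ x ∈ Finset.range n, if x < y then (y-x)*(n-(y-x)) else 0)
        = ∑ x ∈ Finset.range y, (y-x)*(n-(y-x)) := by
    intro y hy
    rw [Finset.mem_range] at hy
    rw [← Finset.sum_filter]
    apply Finset.sum_congr
    · ext x
      simp only [Finset.mem_filter, Finset.mem_range]
      omega
    · intros; rfl
  have step3 : ∀ y, (∑ x ∈ Finset.range y, (y-x)*(n-(y-x)))
      = ∑ d ∈ Finset.range y, (d+1)*(n-(d+1)) := by
    intro y
    rw [← Finset.sum_range_reflect]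
    apply Finset.sum_congr rfl
    intro x hx
    rw [Finset.mem_range] at hx
    congr 1 <;> omega
  rw [step1, Finset.sum_congr rfl step2]
  rw [Finset.sum_congr rfl (fun y _ => step3 y)]
  rw [tri_sum]
  have step4 : (∑ d ∈ Finset.range n, (n - 1 - d) * ((d+1)*(n-(d+1))))
      = ∑ d ∈ Finset.range n, (d+1)*(n-d-1)^2 := by
    apply Finset.sum_congr rfl
    intro d hd
    rw [Finset.mem_range] at hd
    have h1 : n - 1 - d = n - d - 1 := by omega
    have h2 : n - (d+1) = n - d - 1 := by omega
    rw [h1, h2]; ring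
  rw [step4]
  have step5 : (∑ d ∈ Finset.range n, (d+1)*(n-d-1)^2)
      = ∑ d ∈ Finset.range n, d^2*(n-d) := by
    rw [← Finset.sum_range_reflect]
    apply Finset.sum_congr rfl
    intro x hx
    rw [Finset.mem_range] at hx
    have h1 : n - 1 - x + 1 = n - x := by omega
    have h2 : n - (n-1-x) - 1 = x := by omega
    rw [h1, h2]; ring
  rw [step5]
  rw [Nat.cast_sum]
  have step6 : ∀ d ∈ Finset.range n, ((d^2*(n-d) : ℕ) : ℝ)
      = (n:ℝ) * (d:ℝ)^2 - (d:ℝ)^3 := by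
    intro d hd
    rw [Finset.mem_range] at hd
    have : ((n - d : ℕ):ℝ) = (n:ℝ) - d := by
      rw [Nat.cast_sub (le_of_lt hd)]
    push_cast [this]; ring
  rw [Finset.sum_congr rfl step6, Finset.sum_sub_distrib, ← Finset.mul_sum, sum_sq, sum_cb]
  have hn' : (1:ℝ) ≤ n := by exact_mod_cast hn
  field_simp
  ring

/-- The sum over all pairs `i < j` of the `(n-2) × (n-2)` principal minors of `𝓛_A`
obtained by deleting rows and columns `i` and `j` (here `n = m + 2`). -/
theorem stmt10 (m : ℕ) (hn : 3 ≤ m + 2) :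
    ∑ p : Fin (m + 2) × Fin (m + 2),
        (if h : p.1.val < p.2.val then
          ((LA (m + 2)).submatrix
              (p.2.succAbove ∘ (⟨p.1.val, by have := p.2.isLt; omega⟩ : Fin (m + 1)).succAbove)
              (p.2.succAbove ∘ (⟨p.1.val, by have := p.2.isLt; omega⟩ : Fin (m + 1)).succAbove)).det
         else 0) =
      ((m : ℝ) + 2) ^ 2 * (((m : ℝ) + 2) ^ 2 - 1) / (4 * 3 ^ (m + 1)) := by
  have hm : 1 ≤ m := by omega
  have hterm : ∀ p : Fin (m + 2) × Fin (m + 2),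
      (if h : p.1.val < p.2.val then
          ((LA (m + 2)).submatrix
              (p.2.succAbove ∘ (⟨p.1.val, by have := p.2.isLt; omega⟩ : Fin (m + 1)).succAbove)
              (p.2.succAbove ∘ (⟨p.1.val, by have := p.2.isLt; omega⟩ : Fin (m + 1)).succAbove)).det
         else 0)
        = (if p.1.val < p.2.val then
            (((p.2.val - p.1.val) * (m + 2 - (p.2.val - p.1.val)) : ℕ) : ℝ) else 0) / 3^m := by
    intro p
    by_cases h : p.1.val < p.2.val
    · rw [dif_pos h, if_pos h]
      apply minor_det m hm p.1.val p.2.val h p.2.isLt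
      intro k
      rw [Function.comp_apply, val_succAbove, val_succAbove]
      have hk := k.isLt
      split_ifs <;> simp_all <;> omega
    · rw [dif_neg h, if_neg h, zero_div]
  rw [Finset.sum_congr rfl (fun p _ => hterm p), ← Finset.sum_div]
  have hswap : ∑ p : Fin (m + 2) × Fin (m + 2),
      (if p.1.val < p.2.val then
          (((p.2.val - p.1.val) * (m + 2 - (p.2.val - p.1.val)) : ℕ) : ℝ) else 0)
      = ∑ x ∈ Finset.range (m+2), ∑ y ∈ Finset.range (m+2),
          (if x < y then (((y - x) * (m + 2 - (y - x)) : ℕ) : ℝ) else 0) := by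
    rw [Fintype.sum_prod_type]
    rw [Fin.sum_univ_eq_sum_range (fun x => ∑ y : Fin (m+2),
      (if x < y.val then (((y.val - x) * (m + 2 - (y.val - x)) : ℕ) : ℝ) else 0))]
    apply Finset.sum_congr rfl
    intro x _
    exact Fin.sum_univ_eq_sum_range
      (fun y => (if x < y then (((y - x) * (m + 2 - (y - x)) : ℕ) : ℝ) else 0)) (m+2)
  rw [hswap]
  have hcast : ∑ x ∈ Finset.range (m+2), ∑ y ∈ Finset.range (m+2),
      (if x < y then (((y - x) * (m + 2 - (y - x)) : ℕ) : ℝ) else 0)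
      = ((∑ x ∈ Finset.range (m+2), ∑ y ∈ Finset.range (m+2),
          if x < y then (y-x)*(m+2-(y-x)) else 0 : ℕ) : ℝ) := by
    rw [Nat.cast_sum]
    apply Finset.sum_congr rfl
    intro x _
    rw [Nat.cast_sum]
    apply Finset.sum_congr rfl
    intro y _
    split_ifs <;> simp
  rw [hcast, sumN (m+2) (by omega), div_div]
  have h12 : (12:ℝ) * 3 ^ m = 4 * 3 ^ (m+1) := by ring
  rw [h12]
  push_cast
  ring
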